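/- Let G(Θ) = −log det Θ + tr(Σ̂Θ) + ρ‖Θ‖₁ with minimizer Θ̂_G over S_{++}^d, and let (Θ̂_λ, Ẑ_λ) minimize f(Θ, Z) = −log det Θ + tr(Σ̂Θ) + ρ‖Z‖₁ + (λ/2)‖Z − Θ‖_F². Then 0 ≤ G(Θ̂_λ) − G(Θ̂_G) ≤ ρ(‖Θ̂_λ‖₁ − ‖Ẑ_λ‖₁). -/
import Mathlib


open scoped Matrix

/-- Frobenius norm of a matrix. -/
noncomputable def frobNorm {d : ℕ} (A : Matrix (Fin d) (Fin d) ℝ) : ℝ :=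
  Real.sqrt (∑ i, ∑ j, (A i j) ^ 2)

/-- Entrywise ℓ₁ norm of a matrix. -/
noncomputable def l1Norm {d : ℕ} (A : Matrix (Fin d) (Fin d) ℝ) : ℝ :=
  ∑ i, ∑ j, |A i j|

theorem stmt_15 {d : ℕ} (S : Matrix (Fin d) (Fin d) ℝ) (ρ lam : ℝ)
    (hρ : 0 ≤ ρ) (hlam : 0 < lam) (hS : S.IsHermitian)
    (G : Matrix (Fin d) (Fin d) ℝ → ℝ)
    (hG : ∀ Θ, G Θ = -Real.log Θ.det + (S * Θ).trace + ρ * l1Norm Θ)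
    (f : Matrix (Fin d) (Fin d) ℝ → Matrix (Fin d) (Fin d) ℝ → ℝ)
    (hf : ∀ Θ Z, f Θ Z = -Real.log Θ.det + (S * Θ).trace + ρ * l1Norm Z +
        lam / 2 * (frobNorm (Z - Θ)) ^ 2)
    (ΘG : Matrix (Fin d) (Fin d) ℝ) (hΘG : ΘG.PosDef)
    (hGmin : ∀ Θ : Matrix (Fin d) (Fin d) ℝ, Θ.PosDef → G ΘG ≤ G Θ)
    (Θl Zl : Matrix (Fin d) (Fin d) ℝ) (hΘl : Θl.PosDef) (hZl : Zl.PosDef)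
    (hfmin : ∀ Θ Z : Matrix (Fin d) (Fin d) ℝ, Θ.PosDef → Z.PosDef → f Θl Zl ≤ f Θ Z) :
    0 ≤ G Θl - G ΘG ∧ G Θl - G ΘG ≤ ρ * (l1Norm Θl - l1Norm Zl) := by
  have h1 : G ΘG ≤ G Θl := hGmin Θl hΘl
  have h2 : f Θl Zl ≤ f ΘG ΘG := hfmin ΘG ΘG hΘG hΘG
  have hfz : frobNorm ((ΘG : Matrix (Fin d) (Fin d) ℝ) - ΘG) = 0 := by
    simp [frobNorm]
  have hlam2 : 0 ≤ lam / 2 * (frobNorm (Zl - Θl)) ^ 2 := by positivity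
  rw [hf, hf, hfz] at h2
  have hGl := hG Θl
  have hGG := hG ΘG
  constructor
  · linarith
  · nlinarith
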